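/- Let q ≥ 1, Γ ∈ 𝓕_i(a_1,…,a_q; b_1,…,b_q), and suppose b_q + 1 is not a sink of Γ. Let R(Γ) be the graph obtained from Γ by replacing its unique edge of the form (s, b_q) by (s, b_q + 1). Then R(Γ) ∈ 𝓕_i(a_1,…,a_q; b_1,…,b_{q−1}, b_q + 1) and sgn_i(R(Γ)) = −sgn_i(Γ). -/

import Mathlib

open Finset

/-- A "flow graph" is a finite set of directed edges with integer vertices. -/
abbrev FlowGraph : Type := Finset (ℤ × ℤ)

/-- The edges of `E` beginning at `r`. -/
def beginsAt (E : FlowGraph) (r : ℤ) : Finset (ℤ × ℤ) := E.filter (fun e => e.1 = r)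

/-- The edges of `E` ending at `r`. -/
def endsAt (E : FlowGraph) (r : ℤ) : Finset (ℤ × ℤ) := E.filter (fun e => e.2 = r)

/-- `E` is a flow with set of sources `A` and set of sinks `B`:
every edge `(s,t)` has `s < t`; the sources and sinks are pairwise distinct;
exactly one edge begins at each source (and none ends there); exactly one edge
ends at each sink (and none begins there); and every other vertex either meets
no edge, or exactly one edge ends at it and exactly one edge begins at it
(such a vertex is a transit point). -/
structure IsFlow (E : FlowGraph) (A B : Finset ℤ) : Prop where
  edge_lt : ∀ e ∈ E, e.1 < e.2
  disjAB : Disjoint A B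
  source_out : ∀ a ∈ A, (beginsAt E a).card = 1
  source_in : ∀ a ∈ A, endsAt E a = ∅
  sink_in : ∀ b ∈ B, (endsAt E b).card = 1
  sink_out : ∀ b ∈ B, beginsAt E b = ∅
  transit : ∀ r : ℤ, r ∉ A → r ∉ B →
      (beginsAt E r = ∅ ∧ endsAt E r = ∅) ∨
      ((beginsAt E r).card = 1 ∧ (endsAt E r).card = 1)

/-- The set of transit points of the flow `E` with sources `A` and sinks `B`:
the vertices meeting some edge which are neither sources nor sinks. -/
def transitSet (E : FlowGraph) (A B : Finset ℤ) : Finset ℤ :=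
  ((E.image Prod.fst) ∪ (E.image Prod.snd)) \ (A ∪ B)

def IsTransitPoint (E : FlowGraph) (A B : Finset ℤ) (r : ℤ) : Prop :=
  r ∈ transitSet E A B

/-- Two vertices are linked if they lie in the same connected component of `E`. -/
def Linked (E : FlowGraph) (x y : ℤ) : Prop :=
  Relation.ReflTransGen (fun u v => (u, v) ∈ E ∨ (v, u) ∈ E) x y

/-- The finset of values of a family of integers. -/
def srcSet {q : ℕ} (a : Fin q → ℤ) : Finset ℤ := Finset.image a Finset.univ

/-- Membership in `𝓕_i(a_1,…,a_q; b_1,…,b_q)` : a flow with sources the `a j`,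
sinks the `b j`, and no transit point greater than `i`. -/
def InF {q : ℕ} (i : ℤ) (a b : Fin q → ℤ) (E : FlowGraph) : Prop :=
  IsFlow E (srcSet a) (srcSet b) ∧
  ∀ r : ℤ, IsTransitPoint E (srcSet a) (srcSet b) r → r ≤ i

/-- `σ` is the linking permutation: the source `a j` is linked to the sink `b (σ j)`. -/
def IsLinkingPerm {q : ℕ} (E : FlowGraph) (a b : Fin q → ℤ) (σ : Equiv.Perm (Fin q)) : Prop :=
  ∀ j : Fin q, Linked E (a j) (b (σ j))

/-- The `i`-sign of a flow `E` (with sources `A`, sinks given by the family `b` and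
sinks-set `B`), computed from a linking permutation `σ`:
`sgn σ * (-1) ^ (Σ_j (b_j - i) + #transit points)`. -/
def signValue {q : ℕ} (i : ℤ) (b : Fin q → ℤ) (σ : Equiv.Perm (Fin q))
    (E : FlowGraph) (A B : Finset ℤ) : ℤ :=
  (Equiv.Perm.sign σ : ℤ) *
    (-1) ^ ((∑ j : Fin q, (b j - i)).toNat + (transitSet E A B).card)

lemma mem_beginsAt {E : FlowGraph} {r : ℤ} {e : ℤ × ℤ} :
    e ∈ beginsAt E r ↔ e ∈ E ∧ e.1 = r := Finset.mem_filter

lemma mem_endsAt {E : FlowGraph} {r : ℤ} {e : ℤ × ℤ} :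
    e ∈ endsAt E r ↔ e ∈ E ∧ e.2 = r := Finset.mem_filter

lemma outdeg_le {E : FlowGraph} {A B : Finset ℤ} (hE : IsFlow E A B) (r : ℤ) :
    (beginsAt E r).card ≤ 1 := by
  by_cases hA : r ∈ A
  · exact (hE.source_out r hA).le
  by_cases hB : r ∈ B
  · simp [hE.sink_out r hB]
  rcases hE.transit r hA hB with ⟨h, _⟩ | ⟨h, _⟩ <;> simp [h]

lemma linked_symm {E : FlowGraph} {x y : ℤ} (h : Linked E x y) : Linked E y x := by
  refine @Std.Symm.symm _ _ (@Relation.ReflTransGen.symmetric _ _ ⟨?_⟩) _ _ h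
  intro u v huv
  exact huv.symm

lemma linked_to_sink {E : FlowGraph} (hout : ∀ r, (beginsAt E r).card ≤ 1)
    {x : ℤ} (hx : beginsAt E x = ∅) {y : ℤ} (h : Linked E x y) :
    Relation.ReflTransGen (fun u v => (u, v) ∈ E) y x := by
  induction h with
  | refl => exact Relation.ReflTransGen.refl
  | @tail m c hxm step ih =>
    rcases step with h1 | h2
    · -- (m, c) ∈ E
      have hmx : m ≠ x := by
        intro hEq
        rw [hEq] at h1
        have : (x, c) ∈ beginsAt E x := mem_beginsAt.mpr ⟨h1, rfl⟩
        simp [hx] at this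
      rcases Relation.ReflTransGen.cases_head ih with rfl | ⟨z, hz, hzx⟩
      · exact absurd rfl hmx
      · have hc : (m, c) ∈ beginsAt E m := mem_beginsAt.mpr ⟨h1, rfl⟩
        have hz' : (m, z) ∈ beginsAt E m := mem_beginsAt.mpr ⟨hz, rfl⟩
        have := Finset.card_le_one.mp (hout m) _ hc _ hz'
        have hcz : c = z := by
          have := congrArg Prod.snd this; simpa using this
        rw [hcz]; exact hzx
    · exact Relation.ReflTransGen.head h2 ih

lemma sinks_not_linked {E : FlowGraph} {A B : Finset ℤ} (hE : IsFlow E A B)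
    {x y : ℤ} (hx : x ∈ B) (hy : y ∈ B) (h : Linked E x y) : x = y := by
  have hpath := linked_to_sink (outdeg_le hE) (hE.sink_out x hx) h
  rcases Relation.ReflTransGen.cases_head hpath with rfl | ⟨z, hz, -⟩
  · rfl
  · have : (y, z) ∈ beginsAt E y := mem_beginsAt.mpr ⟨hz, rfl⟩
    simp [hE.sink_out y hy] at this

/-- Lemma 17: let `Γ ∈ 𝓕_i(a_1,…,a_q; b_1,…,b_q)` with `b_q + 1` not a sink of
`Γ`. Then `R(Γ)` (replacing the edge `(s, b_q)` by `(s, b_q + 1)`) belongs to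
`𝓕_i(a_1,…,a_q; b_1,…,b_{q-1}, b_q + 1)` and has `i`-sign opposite to that of `Γ`. -/
theorem statement7 {q : ℕ} (i : ℤ) (a b : Fin (q + 1) → ℤ)
    (ha : StrictMono a) (hb : StrictAnti b)
    (hai : ∀ j, a j ≤ i) (hbi : ∀ j, i < b j)
    (E : FlowGraph) (hE : InF i a b E)
    (hsink : ∀ j, b j ≠ b (Fin.last q) + 1)
    (s : ℤ) (hs : (s, b (Fin.last q)) ∈ E) :
    InF i a (Function.update b (Fin.last q) (b (Fin.last q) + 1))
      (insert (s, b (Fin.last q) + 1) (E.erase (s, b (Fin.last q)))) ∧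
    ∀ σ τ : Equiv.Perm (Fin (q + 1)),
      IsLinkingPerm E a b σ →
      IsLinkingPerm (insert (s, b (Fin.last q) + 1) (E.erase (s, b (Fin.last q))))
        a (Function.update b (Fin.last q) (b (Fin.last q) + 1)) τ →
      signValue i (Function.update b (Fin.last q) (b (Fin.last q) + 1)) τ
          (insert (s, b (Fin.last q) + 1) (E.erase (s, b (Fin.last q))))
          (srcSet a) (srcSet (Function.update b (Fin.last q) (b (Fin.last q) + 1)))
        = - signValue i b σ E (srcSet a) (srcSet b) := by
  obtain ⟨hF, htr⟩ := hE
  set β := b (Fin.last q) with hβdef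
  set b' := Function.update b (Fin.last q) (β + 1) with hb'def
  set E' := insert (s, β + 1) (E.erase (s, β)) with hE'def
  set A := srcSet a with hAdef
  set B := srcSet b with hBdef
  set B' := srcSet b' with hB'def
  have hsβ : s < β := hF.edge_lt _ hs
  have hiβ : i < β := hbi _
  have hAle : ∀ x ∈ A, x ≤ i := by
    intro x hx
    rw [hAdef] at hx
    simp only [srcSet, Finset.mem_image, Finset.mem_univ, true_and] at hx
    obtain ⟨j, rfl⟩ := hx
    exact hai j
  have memB : ∀ x : ℤ, x ∈ B ↔ ∃ j, b j = x := by
    intro x; simp [hBdef, srcSet]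
  have memB'0 : ∀ x : ℤ, x ∈ B' ↔ ∃ j, b' j = x := by
    intro x; simp [hB'def, srcSet]
  have hb'last : b' (Fin.last q) = β + 1 := by rw [hb'def]; simp
  have hb'ne : ∀ k, k ≠ Fin.last q → b' k = b k := by
    intro k hk; rw [hb'def]; simp [Function.update_of_ne hk]
  have hbneβ : ∀ k, k ≠ Fin.last q → b k ≠ β := by
    intro k hk hEq; exact hk (hb.injective hEq)
  have memB' : ∀ x : ℤ, x ∈ B' ↔ x = β + 1 ∨ (x ∈ B ∧ x ≠ β) := by
    intro x
    rw [memB'0, memB]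
    constructor
    · rintro ⟨j, rfl⟩
      by_cases hj : j = Fin.last q
      · subst hj; left; exact hb'last
      · right; rw [hb'ne j hj]; exact ⟨⟨j, rfl⟩, hbneβ j hj⟩
    · rintro (rfl | ⟨⟨j, rfl⟩, hne⟩)
      · exact ⟨Fin.last q, hb'last⟩
      · have hj : j ≠ Fin.last q := by rintro rfl; exact hne rfl
        exact ⟨j, hb'ne j hj⟩
  have hβB : β ∈ B := (memB β).mpr ⟨Fin.last q, rfl⟩
  have htB : β + 1 ∉ B := by
    rw [memB]; rintro ⟨j, hj⟩; exact hsink j hj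
  have htB' : β + 1 ∈ B' := (memB' _).mpr (Or.inl rfl)
  have hβA : β ∉ A := fun h => by have := hAle β h; omega
  have htA : β + 1 ∉ A := fun h => by have := hAle _ h; omega
  have hb'inj : Function.Injective b' := by
    intro j k hjk
    by_cases hj : j = Fin.last q <;> by_cases hk : k = Fin.last q
    · rw [hj, hk]
    · rw [hj, hb'last, hb'ne k hk] at hjk; exact absurd hjk.symm (hsink k)
    · rw [hk, hb'last, hb'ne j hj] at hjk; exact absurd hjk (hsink j)
    · rw [hb'ne j hj, hb'ne k hk] at hjk; exact hb.injective hjk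
  have hendβ : endsAt E β = {(s, β)} := by
    have h1 := hF.sink_in β hβB
    rw [Finset.card_eq_one] at h1
    obtain ⟨e, he⟩ := h1
    have hmem : (s, β) ∈ endsAt E β := mem_endsAt.mpr ⟨hs, rfl⟩
    rw [he, Finset.mem_singleton] at hmem
    rw [he, hmem]
  have hbegβ : beginsAt E β = ∅ := hF.sink_out β hβB
  have ht_none : beginsAt E (β + 1) = ∅ ∧ endsAt E (β + 1) = ∅ := by
    rcases hF.transit (β + 1) htA htB with h | ⟨h1, h2⟩
    · exact h
    · exfalso
      have hne : (endsAt E (β + 1)).Nonempty := by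
        rw [← Finset.card_pos, h2]; norm_num
      obtain ⟨e, he⟩ := hne
      rw [mem_endsAt] at he
      have hmem : β + 1 ∈ transitSet E A B := by
        rw [transitSet, Finset.mem_sdiff]
        refine ⟨Finset.mem_union_right _ (Finset.mem_image.mpr ⟨e, he.1, he.2⟩), ?_⟩
        rw [Finset.mem_union]
        rintro (h | h)
        · exact htA h
        · exact htB h
      have := htr _ hmem
      omega
  have hnotβ : ∀ e ∈ E, e ≠ (s, β) → e.1 ≠ β ∧ e.2 ≠ β := by
    intro e he hne
    constructor
    · intro h1
      have : e ∈ beginsAt E β := mem_beginsAt.mpr ⟨he, h1⟩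
      simp [hbegβ] at this
    · intro h2
      have : e ∈ endsAt E β := mem_endsAt.mpr ⟨he, h2⟩
      rw [hendβ, Finset.mem_singleton] at this
      exact hne this
  have hnott : ∀ e ∈ E, e.1 ≠ β + 1 ∧ e.2 ≠ β + 1 := by
    intro e he
    constructor
    · intro h
      have : e ∈ beginsAt E (β + 1) := mem_beginsAt.mpr ⟨he, h⟩
      simp [ht_none.1] at this
    · intro h
      have : e ∈ endsAt E (β + 1) := mem_endsAt.mpr ⟨he, h⟩
      simp [ht_none.2] at this
  have memE' : ∀ e : ℤ × ℤ, e ∈ E' ↔ e = (s, β + 1) ∨ (e ∈ E ∧ e ≠ (s, β)) := by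
    intro e
    rw [hE'def]
    simp only [Finset.mem_insert, Finset.mem_erase]
    tauto
  have hbegNe : ∀ r, r ≠ s → beginsAt E' r = beginsAt E r := by
    intro r hr
    ext e
    rw [mem_beginsAt, mem_beginsAt, memE']
    constructor
    · rintro ⟨(rfl | ⟨he, -⟩), h1⟩
      · exact absurd h1.symm hr
      · exact ⟨he, h1⟩
    · rintro ⟨he, h1⟩
      refine ⟨Or.inr ⟨he, ?_⟩, h1⟩
      rintro rfl
      exact hr h1.symm
  have hendNe : ∀ r, r ≠ β → r ≠ β + 1 → endsAt E' r = endsAt E r := by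
    intro r h1 h2
    ext e
    rw [mem_endsAt, mem_endsAt, memE']
    constructor
    · rintro ⟨(rfl | ⟨he, -⟩), hh⟩
      · exact absurd hh.symm h2
      · exact ⟨he, hh⟩
    · rintro ⟨he, hh⟩
      refine ⟨Or.inr ⟨he, ?_⟩, hh⟩
      rintro rfl
      exact h1 hh.symm
  have hendβ' : endsAt E' β = ∅ := by
    rw [Finset.eq_empty_iff_forall_notMem]
    intro e he
    rw [mem_endsAt, memE'] at he
    rcases he with ⟨rfl | ⟨heE, hne⟩, hh⟩
    · have : β + 1 = β := hh
      omega
    · exact (hnotβ e heE hne).2 hh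
  have hendt' : endsAt E' (β + 1) = {(s, β + 1)} := by
    ext e
    rw [mem_endsAt, memE', Finset.mem_singleton]
    constructor
    · rintro ⟨rfl | ⟨heE, -⟩, hh⟩
      · rfl
      · exact absurd hh (hnott e heE).2
    · rintro rfl
      exact ⟨Or.inl rfl, rfl⟩
  have hbegβ' : beginsAt E' β = ∅ := by
    rw [Finset.eq_empty_iff_forall_notMem]
    intro e he
    rw [mem_beginsAt, memE'] at he
    rcases he with ⟨rfl | ⟨heE, hne⟩, hh⟩
    · have : s = β := hh
      omega
    · exact (hnotβ e heE hne).1 hh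
  have hbegt' : beginsAt E' (β + 1) = ∅ := by
    rw [Finset.eq_empty_iff_forall_notMem]
    intro e he
    rw [mem_beginsAt, memE'] at he
    rcases he with ⟨rfl | ⟨heE, -⟩, hh⟩
    · have : s = β + 1 := hh
      omega
    · exact (hnott e heE).1 hh
  have hbegs : beginsAt E' s = insert (s, β + 1) ((beginsAt E s).erase (s, β)) := by
    ext e
    rw [mem_beginsAt, memE', Finset.mem_insert, Finset.mem_erase, mem_beginsAt]
    constructor
    · rintro ⟨rfl | ⟨heE, hne⟩, hh⟩
      · exact Or.inl rfl
      · exact Or.inr ⟨hne, heE, hh⟩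
    · rintro (rfl | ⟨hne, heE, hh⟩)
      · exact ⟨Or.inl rfl, rfl⟩
      · exact ⟨Or.inr ⟨heE, hne⟩, hh⟩
  have hbegcard : ∀ r, (beginsAt E' r).card = (beginsAt E r).card := by
    intro r
    by_cases hr : r = s
    · subst hr
      rw [hbegs]
      have h1 : (r, β) ∈ beginsAt E r := mem_beginsAt.mpr ⟨hs, rfl⟩
      have h2 : (r, β + 1) ∉ (beginsAt E r).erase (r, β) := by
        intro h
        have h3 := mem_beginsAt.mp (Finset.mem_of_mem_erase h)
        have h4 := (hnott _ h3.1).2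
        simp at h4
      rw [Finset.card_insert_of_notMem h2, Finset.card_erase_of_mem h1]
      have : 0 < (beginsAt E r).card := Finset.card_pos.mpr ⟨_, h1⟩
      omega
    · rw [hbegNe r hr]
  have hsB : s ∉ B := by
    intro h
    have hmem : (s, β) ∈ beginsAt E s := mem_beginsAt.mpr ⟨hs, rfl⟩
    simp [hF.sink_out s h] at hmem
  have hF' : IsFlow E' A B' := by
    refine ⟨?_, ?_, ?_, ?_, ?_, ?_, ?_⟩
    · intro e he
      rcases (memE' e).mp he with rfl | ⟨heE, -⟩
      · show s < β + 1
        omega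
      · exact hF.edge_lt e heE
    · rw [Finset.disjoint_left]
      intro x hxA hxB'
      rcases (memB' x).mp hxB' with rfl | ⟨hxB, -⟩
      · exact htA hxA
      · exact Finset.disjoint_left.mp hF.disjAB hxA hxB
    · intro x hxA
      rw [hbegcard]
      exact hF.source_out x hxA
    · intro x hxA
      have h1 : x ≠ β := fun h => hβA (h ▸ hxA)
      have h2 : x ≠ β + 1 := fun h => htA (h ▸ hxA)
      rw [hendNe x h1 h2]
      exact hF.source_in x hxA
    · intro x hxB'
      rcases (memB' x).mp hxB' with rfl | ⟨hxB, hne⟩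
      · rw [hendt']
        simp
      · have h2 : x ≠ β + 1 := fun h => htB (h ▸ hxB)
        rw [hendNe x hne h2]
        exact hF.sink_in x hxB
    · intro x hxB'
      rcases (memB' x).mp hxB' with rfl | ⟨hxB, hne⟩
      · exact hbegt'
      · have hxs : x ≠ s := fun h => hsB (h ▸ hxB)
        rw [hbegNe x hxs]
        exact hF.sink_out x hxB
    · intro r hrA hrB'
      by_cases hrβ : r = β
      · subst hrβ
        exact Or.inl ⟨hbegβ', hendβ'⟩
      by_cases hrt : r = β + 1
      · exact absurd (hrt ▸ htB') hrB'
      have hrB : r ∉ B := fun h => hrB' ((memB' r).mpr (Or.inr ⟨h, hrβ⟩))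
      rcases hF.transit r hrA hrB with ⟨h1, h2⟩ | ⟨h1, h2⟩
      · refine Or.inl ⟨?_, ?_⟩
        · by_cases hrs : r = s
          · exfalso
            rw [hrs] at h1
            have hmem : (s, β) ∈ beginsAt E s := mem_beginsAt.mpr ⟨hs, rfl⟩
            simp [h1] at hmem
          · rw [hbegNe r hrs]
            exact h1
        · rw [hendNe r hrβ hrt]
          exact h2
      · exact Or.inr ⟨by rw [hbegcard]; exact h1, by rw [hendNe r hrβ hrt]; exact h2⟩
  have hVmem : ∀ (G : FlowGraph) (r : ℤ),
      r ∈ (G.image Prod.fst ∪ G.image Prod.snd) ↔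
        ((beginsAt G r).Nonempty ∨ (endsAt G r).Nonempty) := by
    intro G r
    simp only [Finset.mem_union, Finset.mem_image, beginsAt, endsAt,
      Finset.filter_nonempty_iff]
  have htrans_eq : transitSet E' A B' = transitSet E A B := by
    ext r
    rw [transitSet, transitSet, Finset.mem_sdiff, Finset.mem_sdiff, hVmem, hVmem,
        Finset.mem_union, Finset.mem_union]
    constructor
    · rintro ⟨hmem, hAB⟩
      push_neg at hAB
      obtain ⟨hrA, hrB'⟩ := hAB
      have hrt : r ≠ β + 1 := fun h => hrB' (h ▸ htB')
      have hrβ : r ≠ β := by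
        rintro rfl
        rcases hmem with h | h
        · rw [hbegβ'] at h; exact h.ne_empty rfl
        · rw [hendβ'] at h; exact h.ne_empty rfl
      refine ⟨?_, ?_⟩
      · rcases hmem with h | h
        · by_cases hrs : r = s
          · subst hrs
            exact Or.inl ⟨_, mem_beginsAt.mpr ⟨hs, rfl⟩⟩
          · rw [hbegNe r hrs] at h
            exact Or.inl h
        · rw [hendNe r hrβ hrt] at h
          exact Or.inr h
      · push_neg
        exact ⟨hrA, fun h => hrB' ((memB' r).mpr (Or.inr ⟨h, hrβ⟩))⟩
    · rintro ⟨hmem, hAB⟩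
      push_neg at hAB
      obtain ⟨hrA, hrB⟩ := hAB
      have hrβ : r ≠ β := fun h => hrB (h ▸ hβB)
      have hrt : r ≠ β + 1 := by
        rintro rfl
        rcases hmem with h | h
        · rw [ht_none.1] at h; exact h.ne_empty rfl
        · rw [ht_none.2] at h; exact h.ne_empty rfl
      refine ⟨?_, ?_⟩
      · rcases hmem with h | h
        · by_cases hrs : r = s
          · subst hrs
            exact Or.inl ⟨_, mem_beginsAt.mpr ⟨(memE' _).mpr (Or.inl rfl), rfl⟩⟩
          · rw [← hbegNe r hrs] at h
            exact Or.inl h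
        · rw [← hendNe r hrβ hrt] at h
          exact Or.inr h
      · push_neg
        refine ⟨hrA, fun h => ?_⟩
        rcases (memB' r).mp h with h' | ⟨h', -⟩
        · exact hrt h'
        · exact hrB h'
  refine ⟨⟨hF', ?_⟩, ?_⟩
  · intro r hr
    refine htr r ?_
    have hr' : r ∈ transitSet E' A B' := hr
    rw [htrans_eq] at hr'
    exact hr'
  · intro σ τ hσ hτ
    set g : ℤ → ℤ := fun x => if x = β then β + 1 else x with hgdef
    have hedge : ∀ u v : ℤ, (u, v) ∈ E → (g u, g v) ∈ E' := by
      intro u v huv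
      by_cases h : (u, v) = (s, β)
      · have hu : u = s := congrArg Prod.fst h
        have hv : v = β := congrArg Prod.snd h
        have hgu : g u = s := by rw [hgdef]; simp only []; rw [hu, if_neg (by omega : ¬ (s = β))]
        have hgv : g v = β + 1 := by rw [hgdef]; simp only []; rw [hv, if_pos rfl]
        rw [hgu, hgv]
        exact (memE' _).mpr (Or.inl rfl)
      · obtain ⟨h1, h2⟩ := hnotβ (u, v) huv h
        have h1' : u ≠ β := h1
        have h2' : v ≠ β := h2
        have hgu : g u = u := by rw [hgdef]; simp only []; rw [if_neg h1']
        have hgv : g v = v := by rw [hgdef]; simp only []; rw [if_neg h2']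
        rw [hgu, hgv]
        exact (memE' _).mpr (Or.inr ⟨huv, h⟩)
    have hlift : ∀ x y : ℤ, Linked E x y → Linked E' (g x) (g y) := by
      intro x y h
      refine Relation.ReflTransGen.lift g ?_ x y h
      intro u v huv
      rcases huv with h | h
      · exact Or.inl (hedge u v h)
      · exact Or.inr (hedge v u h)
    have hga : ∀ j, g (a j) = a j := by
      intro j
      have hne : a j ≠ β := by have := hai j; omega
      rw [hgdef]
      simp [hne]
    have hgb : ∀ k, g (b k) = b' k := by
      intro k
      by_cases hk : k = Fin.last q
      · subst hk
        rw [← hβdef, hb'last, hgdef]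
        simp
      · have h1 := hbneβ k hk
        rw [hb'ne k hk, hgdef]
        simp [h1]
    have hσ' : IsLinkingPerm E' a b' σ := by
      intro j
      have h := hlift _ _ (hσ j)
      rwa [hga, hgb] at h
    have hτσ : τ = σ := by
      refine Equiv.ext fun j => ?_
      apply hb'inj
      have l1 := hσ' j
      have l2 := hτ j
      have h3 : Linked E' (b' (τ j)) (b' (σ j)) :=
        Relation.ReflTransGen.trans (linked_symm l2) l1
      exact sinks_not_linked hF' ((memB'0 _).mpr ⟨τ j, rfl⟩) ((memB'0 _).mpr ⟨σ j, rfl⟩) h3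
    rw [hτσ]
    simp only [signValue]
    rw [htrans_eq]
    have hbb' : ∀ j, b' j - i = (b j - i) + (if j = Fin.last q then 1 else 0) := by
      intro j
      by_cases hj : j = Fin.last q
      · subst hj
        rw [hb'last, if_pos rfl, ← hβdef]
        ring
      · rw [hb'ne j hj, if_neg hj]
        ring
    have hS : (∑ j : Fin (q + 1), (b' j - i)) = (∑ j : Fin (q + 1), (b j - i)) + 1 := by
      rw [Finset.sum_congr rfl fun j _ => hbb' j, Finset.sum_add_distrib]
      congr 1
      simp
    have hpos : 0 ≤ ∑ j : Fin (q + 1), (b j - i) :=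
      Finset.sum_nonneg fun j _ => by have := hbi j; omega
    have hsum : (∑ j : Fin (q + 1), (b' j - i)).toNat
        = (∑ j : Fin (q + 1), (b j - i)).toNat + 1 := by omega
    rw [hsum]
    rw [show (∑ j : Fin (q + 1), (b j - i)).toNat + 1 + (transitSet E A B).card
        = ((∑ j : Fin (q + 1), (b j - i)).toNat + (transitSet E A B).card) + 1 from by omega,
      pow_succ]
    ring
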